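/- For any convex regularizer R with Bregman divergence D_R on a convex set K, any vector a, and any c ∈ K, the mirror descent update w* = argmin_{w∈K}{⟨a, w⟩ + D_R(w, c)} satisfies ⟨w* - d, a⟩ ≤ D_R(d, c) - D_R(d, w*) - D_R(w*, c) for every d ∈ K. -/

import Mathlib

/-- Beck–Teboulle three-point property: the mirror descent update
`w* = argmin_{w∈K} { ⟨a, w⟩ + D_R(w, c) }` satisfies
`⟨w* - d, a⟩ ≤ D_R(d,c) - D_R(d,w*) - D_R(w*,c)` for every `d ∈ K`. -/
theorem mirror_descent_three_point
    {E : Type*} [NormedAddCommGroup E] [InnerProductSpace ℝ E] [CompleteSpace E]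
    (K : Set E) (hK : Convex ℝ K)
    (R : E → ℝ) (gR : E → E)
    (hR_conv : ConvexOn ℝ K R)
    (hgR : ∀ x, HasGradientAt R (gR x) x)   -- gR is the gradient of R
    (D : E → E → ℝ)
    (hD : ∀ x y, D x y = R x - R y - (inner ℝ (gR y) (x - y) : ℝ))  -- Bregman divergence
    (a : E) (c wstar : E) (hc : c ∈ K) (hw : wstar ∈ K)
    -- w* is the minimizer of ⟨a, ·⟩ + D_R(·, c) over K:
    (hmin : ∀ w ∈ K, (inner ℝ a wstar : ℝ) + D wstar c ≤ (inner ℝ a w : ℝ) + D w c) :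
    ∀ d ∈ K, (inner ℝ (wstar - d) a : ℝ) ≤ D d c - D d wstar - D wstar c := by
  intro d hd
  set v := d - wstar with hv
  -- the objective along the segment from wstar to d
  set φ : ℝ → ℝ := fun t => (inner ℝ a (wstar + t • v) : ℝ) + R (wstar + t • v)
    - (inner ℝ (gR c) ((wstar + t • v) - c) : ℝ) with hφ
  -- φ has derivative L at 0
  set L : ℝ := (inner ℝ a v : ℝ) + (inner ℝ (gR wstar) v : ℝ) - (inner ℝ (gR c) v : ℝ) with hL
  have hline : HasDerivAt (fun t : ℝ => wstar + t • v) v 0 := by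
    simpa using ((hasDerivAt_id (0:ℝ)).smul_const v).const_add wstar
  have hderiv : HasDerivAt φ L 0 := by
    have h1 : HasDerivAt (fun t : ℝ => (inner ℝ a (wstar + t • v) : ℝ)) (inner ℝ a v : ℝ) 0 := by
      have h := ((innerSL ℝ a).hasFDerivAt.comp_hasDerivAt 0 hline)
      simp at h; exact h
    have h2 : HasDerivAt (fun t : ℝ => R (wstar + t • v)) (inner ℝ (gR wstar) v : ℝ) 0 := by
      have := (hgR (wstar + (0:ℝ) • v)).hasFDerivAt.comp_hasDerivAt 0 hline
      simp at this; exact this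
    have h3 : HasDerivAt (fun t : ℝ => (inner ℝ (gR c) ((wstar + t • v) - c) : ℝ))
        (inner ℝ (gR c) v : ℝ) 0 := by
      have := ((innerSL ℝ (gR c)).hasFDerivAt.comp_hasDerivAt 0 (hline.sub_const c))
      simp at this; exact this
    exact (h1.add h2).sub h3
  -- φ 0 ≤ φ t for t ∈ [0,1]
  have hmono : ∀ t ∈ Set.Icc (0:ℝ) 1, φ 0 ≤ φ t := by
    intro t ht
    have hmem : wstar + t • v ∈ K := by
      have h := hK hw hd (by linarith [ht.1, ht.2] : (0:ℝ) ≤ 1 - t) ht.1 (by ring)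
      have he : (1 - t) • wstar + t • d = wstar + t • v := by rw [hv]; module
      rwa [he] at h
    have := hmin _ hmem
    have hDeq : ∀ w, D w c = R w - R c - (inner ℝ (gR c) (w - c) : ℝ) := fun w => hD w c
    rw [hDeq, hDeq] at this
    simp only [hφ, zero_smul, add_zero]
    linarith
  -- hence L ≥ 0
  have hL0 : 0 ≤ L := by
    have hdw : HasDerivWithinAt φ L (Set.Ioi 0) 0 := hderiv.hasDerivWithinAt
    rw [hasDerivWithinAt_iff_tendsto_slope] at hdw
    have hsub : Set.Ioi (0:ℝ) \ {0} = Set.Ioi 0 := by simp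
    rw [hsub] at hdw
    refine ge_of_tendsto hdw ?_
    filter_upwards [Ioo_mem_nhdsGT_of_mem (Set.mem_Ico.mpr ⟨le_refl (0:ℝ), one_pos⟩)] with t ht
    have ht0 : 0 < t := ht.1
    have := hmono t ⟨le_of_lt ht0, le_of_lt ht.2⟩
    have : 0 ≤ φ t - φ 0 := by linarith
    have h4 := div_nonneg this (le_of_lt ht0)
    simpa [slope_def_field, div_eq_inv_mul] using h4
  -- expand the Bregman divergences
  have hexp : D d c - D d wstar - D wstar c
      = (inner ℝ (gR wstar) v : ℝ) - (inner ℝ (gR c) v : ℝ) := by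
    rw [hD, hD, hD, hv]
    have e1 : d - c = (d - wstar) + (wstar - c) := by abel
    rw [e1, inner_add_right]
    ring
  have hcomm : (inner ℝ (wstar - d) a : ℝ) = -(inner ℝ a v : ℝ) := by
    rw [real_inner_comm, hv, ← inner_neg_right]
    congr 1; abel
  rw [hexp, hcomm]
  linarith
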